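/- Let ζ be a probability measure on ℝ and ν a finite signed measure on ℝ with ‖ν‖_∞ ≤ 1 (Kolmogorov norm), and let A be a p×p real matrix. Then the Kolmogorov norm of the signed measure ∑_{k=1}^p L_A(ζ^{⊗(k-1)} ⊗ ν ⊗ ζ^{⊗(p-k)}) is at most 2p. -/

import Mathlib

open MeasureTheory

/-- Kolmogorov norm of a signed measure on ℝ. -/
noncomputable def kolNorm1 (s : SignedMeasure ℝ) : ℝ := ⨆ x : ℝ, |s (Set.Iic x)|

/-- Kolmogorov norm of a signed measure on ℝ^p. -/
noncomputable def kolNorm {p : ℕ} (s : SignedMeasure (Fin p → ℝ)) : ℝ :=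
  ⨆ x : Fin p → ℝ, |s (Set.Iic x)|

/-- Jordan part of a signed measure on ℝ, selected by a Boolean. -/
noncomputable def jpart (s : SignedMeasure ℝ) (b : Bool) : Measure ℝ :=
  bif b then s.toJordanDecomposition.negPart else s.toJordanDecomposition.posPart

instance (s : SignedMeasure ℝ) (b : Bool) : IsFiniteMeasure (jpart s b) := by
  cases b <;> simp only [jpart, cond] <;> infer_instance

/-- Product of finite signed measures on ℝ, as a signed measure on ℝ^p. -/
noncomputable def signedPi {p : ℕ} (μ : Fin p → SignedMeasure ℝ) :
    SignedMeasure (Fin p → ℝ) :=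
  ∑ α : Fin p → Bool,
    ((-1 : ℝ) ^ (Finset.univ.filter (fun i => α i)).card) •
      (Measure.pi (fun i => jpart (μ i) (α i))).toSignedMeasure

section AuxLemmas

open Set

lemma sm_eval (ν : SignedMeasure ℝ) {s : Set ℝ} (hs : MeasurableSet s) :
    ν s = (ν.toJordanDecomposition.posPart s).toReal
        - (ν.toJordanDecomposition.negPart s).toReal := by
  conv_lhs => rw [← ν.toSignedMeasure_toJordanDecomposition]
  rw [JordanDecomposition.toSignedMeasure, VectorMeasure.sub_apply,
    Measure.toSignedMeasure_apply_measurable hs, Measure.toSignedMeasure_apply_measurable hs]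
  rfl

lemma sm_abs_le (ν : SignedMeasure ℝ) (s : Set ℝ) :
    |ν s| ≤ (ν.toJordanDecomposition.posPart Set.univ).toReal
        + (ν.toJordanDecomposition.negPart Set.univ).toReal := by
  by_cases hs : MeasurableSet s
  · rw [sm_eval ν hs]
    have h1 : (ν.toJordanDecomposition.posPart s).toReal
        ≤ (ν.toJordanDecomposition.posPart Set.univ).toReal :=
      ENNReal.toReal_mono (measure_ne_top _ _) (measure_mono (subset_univ s))
    have h2 : (ν.toJordanDecomposition.negPart s).toReal
        ≤ (ν.toJordanDecomposition.negPart Set.univ).toReal :=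
      ENNReal.toReal_mono (measure_ne_top _ _) (measure_mono (subset_univ s))
    have h3 : (0:ℝ) ≤ (ν.toJordanDecomposition.posPart s).toReal := ENNReal.toReal_nonneg
    have h4 : (0:ℝ) ≤ (ν.toJordanDecomposition.negPart s).toReal := ENNReal.toReal_nonneg
    rw [abs_sub_le_iff]
    constructor <;> nlinarith
  · rw [ν.not_measurable hs]
    simp only [abs_zero]
    positivity

lemma abs_Iic_le {ν : SignedMeasure ℝ} (hν : kolNorm1 ν ≤ 1) (x : ℝ) :
    |ν (Iic x)| ≤ 1 := by
  refine le_trans ?_ hν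
  unfold kolNorm1
  exact le_ciSup (f := fun x : ℝ => |ν (Iic x)|)
    ⟨_, fun r ⟨y, hy⟩ => by rw [← hy]; exact sm_abs_le ν (Iic y)⟩ x

lemma sm_tendsto (ν : SignedMeasure ℝ) (s : ℕ → Set ℝ) (hm : ∀ n, MeasurableSet (s n))
    (hmono : Monotone s) :
    Filter.Tendsto (fun n => ν (s n)) Filter.atTop (nhds (ν (⋃ n, s n))) := by
  have hU : MeasurableSet (⋃ n, s n) := MeasurableSet.iUnion hm
  have hp := tendsto_measure_iUnion_atTop (μ := ν.toJordanDecomposition.posPart) hmono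
  have hq := tendsto_measure_iUnion_atTop (μ := ν.toJordanDecomposition.negPart) hmono
  have hp' := (ENNReal.tendsto_toReal (measure_ne_top _ _)).comp hp
  have hq' := (ENNReal.tendsto_toReal (measure_ne_top _ _)).comp hq
  have hsub := hp'.sub hq'
  simp only [Function.comp_def] at hsub
  have heq : (fun n => ν (s n))
      = fun n => (ν.toJordanDecomposition.posPart (s n)).toReal
        - (ν.toJordanDecomposition.negPart (s n)).toReal :=
    funext fun n => sm_eval ν (hm n)
  rw [heq, sm_eval ν hU]
  exact hsub

lemma abs_univ_le {ν : SignedMeasure ℝ} (hν : kolNorm1 ν ≤ 1) : |ν Set.univ| ≤ 1 := by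
  have hU : (⋃ n : ℕ, Iic (n : ℝ)) = Set.univ := by
    ext t
    simp only [mem_iUnion, mem_Iic, mem_univ, iff_true]
    exact ⟨⌈t⌉₊, Nat.le_ceil t⟩
  have h := sm_tendsto ν (fun n => Iic (n : ℝ)) (fun n => measurableSet_Iic)
    (fun a b hab => Iic_subset_Iic.2 (by exact_mod_cast hab))
  rw [hU] at h
  exact le_of_tendsto h.abs (Filter.Eventually.of_forall fun n => abs_Iic_le hν _)

lemma abs_Iio_le {ν : SignedMeasure ℝ} (hν : kolNorm1 ν ≤ 1) (x : ℝ) :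
    |ν (Iio x)| ≤ 1 := by
  have hU : (⋃ n : ℕ, Iic (x - 1 / (n + 1))) = Iio x := by
    ext t
    simp only [mem_iUnion, mem_Iic, mem_Iio]
    constructor
    · rintro ⟨n, hn⟩
      have : (0:ℝ) < 1 / (n + 1) := by positivity
      linarith
    · intro ht
      obtain ⟨n, hn⟩ := exists_nat_one_div_lt (by linarith : (0:ℝ) < x - t)
      exact ⟨n, by linarith⟩
  have hmono : Monotone fun n : ℕ => Iic (x - 1 / ((n:ℝ) + 1)) := by
    intro a b hab
    apply Iic_subset_Iic.2
    have : (1:ℝ) / (b + 1) ≤ 1 / (a + 1) := by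
      apply one_div_le_one_div_of_le (by positivity)
      exact_mod_cast by omega
    linarith
  have h := sm_tendsto ν _ (fun n => measurableSet_Iic) hmono
  rw [hU] at h
  exact le_of_tendsto h.abs (Filter.Eventually.of_forall fun n => abs_Iic_le hν _)

lemma key_interval {ν : SignedMeasure ℝ} (hν : kolNorm1 ν ≤ 1) {I : Set ℝ}
    (hc : IsClosed I) (ho : I.OrdConnected) : |ν I| ≤ 2 := by
  rcases I.eq_empty_or_nonempty with rfl | hne
  · simp
  by_cases hb : BddBelow I <;> by_cases ht : BddAbove I
  · -- Icc
    have hI : I = Icc (sInf I) (sSup I) := by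
      apply Subset.antisymm
      · exact fun t hti => ⟨csInf_le hb hti, le_csSup ht hti⟩
      · exact fun t htt => ho.out (hc.csInf_mem hne hb) (hc.csSup_mem hne ht) htt
    have hdiff : Icc (sInf I) (sSup I) = Iic (sSup I) \ Iio (sInf I) := by
      ext t; simp only [mem_Icc, mem_diff, mem_Iic, mem_Iio, not_lt]; tauto
    have hsub : Iio (sInf I) ⊆ Iic (sSup I) := by
      intro t htt
      obtain ⟨w, hw⟩ := hne
      exact le_trans (le_of_lt htt) (le_trans (csInf_le hb hw) (le_csSup ht hw))
    rw [hI, hdiff, VectorMeasure.of_diff measurableSet_Iio measurableSet_Iic hsub]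
    have h1 := abs_Iic_le hν (sSup I)
    have h2 := abs_Iio_le hν (sInf I)
    calc |ν (Iic (sSup I)) - ν (Iio (sInf I))| ≤ |ν (Iic (sSup I))| + |ν (Iio (sInf I))| :=
          abs_sub _ _
      _ ≤ 2 := by linarith
  · -- Ici
    have hI : I = Ici (sInf I) := by
      apply Subset.antisymm
      · exact fun t hti => csInf_le hb hti
      · intro t htt
        obtain ⟨b, hbI, hbt⟩ := not_bddAbove_iff.mp ht t
        exact ho.out (hc.csInf_mem hne hb) hbI ⟨htt, le_of_lt hbt⟩
    have hdiff : Ici (sInf I) = Set.univ \ Iio (sInf I) := by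
      ext t; simp [not_lt]
    rw [hI, hdiff, VectorMeasure.of_diff measurableSet_Iio MeasurableSet.univ (subset_univ _)]
    have h1 := abs_univ_le hν
    have h2 := abs_Iio_le hν (sInf I)
    calc |ν Set.univ - ν (Iio (sInf I))| ≤ |ν Set.univ| + |ν (Iio (sInf I))| := abs_sub _ _
      _ ≤ 2 := by linarith
  · -- Iic
    have hI : I = Iic (sSup I) := by
      apply Subset.antisymm
      · exact fun t hti => le_csSup ht hti
      · intro t htt
        obtain ⟨a, haI, hat⟩ := not_bddBelow_iff.mp hb t
        exact ho.out haI (hc.csSup_mem hne ht) ⟨le_of_lt hat, htt⟩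
    rw [hI]
    linarith [abs_Iic_le hν (sSup I)]
  · -- univ
    have hI : I = Set.univ := by
      apply eq_univ_of_forall
      intro t
      obtain ⟨a, haI, hat⟩ := not_bddBelow_iff.mp hb t
      obtain ⟨b, hbI, hbt⟩ := not_bddAbove_iff.mp ht t
      exact ho.out haI hbI ⟨le_of_lt hat, le_of_lt hbt⟩
    rw [hI]
    linarith [abs_univ_le hν]

lemma toJD_measure (ζ : Measure ℝ) [IsFiniteMeasure ζ] :
    ζ.toSignedMeasure.toJordanDecomposition
      = ⟨ζ, 0, Measure.MutuallySingular.zero_right⟩ := by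
  apply MeasureTheory.SignedMeasure.toJordanDecomposition_eq
  show ζ.toSignedMeasure = _
  rw [JordanDecomposition.toSignedMeasure]
  simp [Measure.toSignedMeasure_zero]

lemma jpart_false (ζ : Measure ℝ) [IsFiniteMeasure ζ] :
    jpart ζ.toSignedMeasure false = ζ := by
  simp only [jpart, cond, toJD_measure]

lemma jpart_true (ζ : Measure ℝ) [IsFiniteMeasure ζ] :
    jpart ζ.toSignedMeasure true = 0 := by
  simp only [jpart, cond, toJD_measure]

lemma signedPi_eq {p : ℕ} (ζ : Measure ℝ) [IsProbabilityMeasure ζ]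
    (ν : SignedMeasure ℝ) (k : Fin p) :
    signedPi (fun i => if i = k then ν else ζ.toSignedMeasure)
      = (Measure.pi fun i =>
            jpart (if i = k then ν else ζ.toSignedMeasure) false).toSignedMeasure
        - (Measure.pi fun i =>
            jpart (if i = k then ν else ζ.toSignedMeasure) (decide (i = k))).toSignedMeasure := by
  classical
  set μ : Fin p → SignedMeasure ℝ := fun i => if i = k then ν else ζ.toSignedMeasure with hμ
  set F : (Fin p → Bool) → SignedMeasure (Fin p → ℝ) := fun α =>
    ((-1 : ℝ) ^ (Finset.univ.filter (fun i => α i = true)).card) •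
      (Measure.pi (fun i => jpart (μ i) (α i))).toSignedMeasure with hF
  set α₀ : Fin p → Bool := fun _ => false with hα₀
  set α₁ : Fin p → Bool := fun i => decide (i = k) with hα₁
  have hne : α₀ ≠ α₁ := by
    intro h
    have := congrFun h k
    simp [hα₀, hα₁] at this
  have hvanish : ∀ α : Fin p → Bool, α ≠ α₀ → α ≠ α₁ → F α = 0 := by
    intro α h0 h1
    have hex : ∃ i, i ≠ k ∧ α i = true := by
      by_contra hcon
      push_neg at hcon
      have hcon' : ∀ i, i ≠ k → α i = false := fun i h => by simpa using hcon i h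
      rcases Bool.eq_false_or_eq_true (α k) with hk | hk
      · apply h1
        funext i
        simp only [hα₁]
        by_cases hik : i = k
        · subst hik; simp [hk]
        · simp [hik, hcon' i hik]
      · apply h0
        funext i
        simp only [hα₀]
        by_cases hik : i = k
        · rw [hik, hk]
        · exact hcon' i hik
    obtain ⟨i, hik, hαi⟩ := hex
    have hz : jpart (μ i) (α i) = 0 := by
      rw [hαi, hμ]
      simp only [if_neg hik]
      exact jpart_true ζ
    have hpi : Measure.pi (fun j => jpart (μ j) (α j)) = 0 := by
      rw [← Measure.measure_univ_eq_zero, Measure.pi_univ]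
      exact Finset.prod_eq_zero (Finset.mem_univ i) (by rw [hz]; rfl)
    simp only [hF, hpi, Measure.toSignedMeasure_zero, smul_zero]
  have hsum : signedPi μ = F α₀ + F α₁ := by
    rw [signedPi]
    rw [show (Finset.univ : Finset (Fin p → Bool)) = insert α₀ {α₁} ∪
        (Finset.univ \ insert α₀ {α₁}) by
      rw [Finset.union_sdiff_of_subset (Finset.subset_univ _)]]
    rw [Finset.sum_union (Finset.disjoint_sdiff)]
    rw [Finset.sum_insert (by simp [hne]), Finset.sum_singleton]
    rw [Finset.sum_eq_zero, add_zero]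
    intro α hα
    simp only [Finset.mem_sdiff, Finset.mem_insert, Finset.mem_singleton] at hα
    push_neg at hα
    exact hvanish α hα.2.1 hα.2.2
  rw [hsum]
  have h0 : F α₀ = (Measure.pi fun i => jpart (μ i) false).toSignedMeasure := by
    have hcard : (Finset.univ.filter fun i : Fin p => (α₀ i = true)).card = 0 := by
      simp [hα₀]
    simp only [hF, hcard, pow_zero, one_smul]
    rfl
  have h1 : F α₁ = -(Measure.pi fun i => jpart (μ i) (decide (i = k))).toSignedMeasure := by
    have hcard : (Finset.univ.filter fun i : Fin p => (α₁ i = true)).card = 1 := by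
      have : (Finset.univ.filter fun i : Fin p => (α₁ i = true)) = {k} := by
        ext i; simp [hα₁]
      rw [this, Finset.card_singleton]
    simp only [hF, hcard, pow_one, neg_smul, one_smul]
    exact neg_one_smul ℝ (M := SignedMeasure (Fin p → ℝ)) _
  rw [h0, h1]
  abel

lemma pi_apply_eq {n : ℕ} (f : Fin (n + 1) → Measure ℝ) [∀ i, IsFiniteMeasure (f i)]
    (k : Fin (n + 1)) {T : Set (Fin (n + 1) → ℝ)} (hT : MeasurableSet T) :
    Measure.pi f T
      = ∫⁻ y, (f k) {t | Fin.insertNth k t y ∈ T}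
          ∂(Measure.pi fun j : Fin n => f (k.succAbove j)) := by
  have h1 := (measurePreserving_piFinSuccAbove f k).symm
  set e := MeasurableEquiv.piFinSuccAbove (fun _ : Fin (n+1) => ℝ) k with he
  have h2 : Measure.pi f T
      = ((f k).prod (Measure.pi fun j => f (k.succAbove j))) (e.symm ⁻¹' T) := by
    rw [h1.measure_preimage hT.nullMeasurableSet]
  rw [h2, Measure.prod_apply_symm (e.symm.measurable hT)]
  congr 1

lemma section_nice {n : ℕ} (A : Matrix (Fin (n+1)) (Fin (n+1)) ℝ) (x : Fin (n+1) → ℝ)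
    (k : Fin (n+1)) (y : Fin n → ℝ) :
    IsClosed {t : ℝ | Fin.insertNth k t y ∈ A.mulVec ⁻¹' Iic x} ∧
    OrdConnected {t : ℝ | Fin.insertNth k t y ∈ A.mulVec ⁻¹' Iic x} := by
  have hset : {t : ℝ | Fin.insertNth k t y ∈ A.mulVec ⁻¹' Iic x}
      = ⋂ i, {t : ℝ | A i k * t + (∑ j, A i (k.succAbove j) * y j) ≤ x i} := by
    ext t
    simp only [mem_setOf_eq, mem_preimage, mem_Iic, Pi.le_def, mem_iInter]
    apply forall_congr'
    intro i
    have h : A.mulVec (Fin.insertNth k t y) i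
        = A i k * t + ∑ j, A i (k.succAbove j) * y j := by
      simp only [Matrix.mulVec, dotProduct]
      rw [Fin.sum_univ_succAbove (fun j => A i j * (Fin.insertNth (α := fun _ => ℝ) k t y) j) k]
      simp [Fin.insertNth_apply_same, Fin.insertNth_apply_succAbove]
    rw [h]
  rw [hset]
  constructor
  · exact isClosed_iInter fun i => isClosed_le (by fun_prop) continuous_const
  · apply Set.ordConnected_iInter
    intro i
    constructor
    intro t1 h1 t2 h2 t ht
    simp only [mem_setOf_eq] at *
    rcases le_total 0 (A i k) with h | h
    · nlinarith [ht.1, ht.2]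
    · nlinarith [ht.1, ht.2]

lemma perk_bound {n : ℕ} (ζ : Measure ℝ) [IsProbabilityMeasure ζ]
    (ν : SignedMeasure ℝ) (hν : kolNorm1 ν ≤ 1) (k : Fin (n+1))
    {T : Set (Fin (n+1) → ℝ)} (hT : MeasurableSet T)
    (hsec : ∀ y : Fin n → ℝ, IsClosed {t : ℝ | Fin.insertNth k t y ∈ T} ∧
      OrdConnected {t : ℝ | Fin.insertNth k t y ∈ T}) :
    |signedPi (fun i => if i = k then ν else ζ.toSignedMeasure) T| ≤ 2 := by
  rw [signedPi_eq ζ ν k, VectorMeasure.sub_apply,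
    Measure.toSignedMeasure_apply_measurable hT, Measure.toSignedMeasure_apply_measurable hT,
    measureReal_def, measureReal_def, pi_apply_eq _ k hT, pi_apply_eq _ k hT]
  have hfp_k : jpart (if k = k then ν else ζ.toSignedMeasure) false
      = ν.toJordanDecomposition.posPart := by simp [jpart]
  have hfm_k : jpart (if k = k then ν else ζ.toSignedMeasure) (decide (k = k))
      = ν.toJordanDecomposition.negPart := by simp [jpart]
  have h1 : (Measure.pi fun j : Fin n =>
      jpart (if k.succAbove j = k then ν else ζ.toSignedMeasure) false)
      = Measure.pi (fun _ : Fin n => ζ) := by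
    congr 1
    funext j
    rw [if_neg (Fin.succAbove_ne k j), jpart_false]
  have h2 : (Measure.pi fun j : Fin n =>
      jpart (if k.succAbove j = k then ν else ζ.toSignedMeasure) (decide (k.succAbove j = k)))
      = Measure.pi (fun _ : Fin n => ζ) := by
    congr 1
    funext j
    rw [decide_eq_false (Fin.succAbove_ne k j), if_neg (Fin.succAbove_ne k j), jpart_false]
  rw [hfp_k, hfm_k, h1, h2]
  set P := ν.toJordanDecomposition.posPart with hP
  set N := ν.toJordanDecomposition.negPart with hN
  set π' := Measure.pi (fun _ : Fin n => ζ) with hπ'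
  set σ := fun y : Fin n → ℝ => {t : ℝ | Fin.insertNth k t y ∈ T} with hσ
  have hgeq : (fun q : ℝ × (Fin n → ℝ) => Fin.insertNth (α := fun _ => ℝ) k q.1 q.2)
      = ⇑(MeasurableEquiv.piFinSuccAbove (fun _ : Fin (n+1) => ℝ) k).symm := by
    funext q; rfl
  have hgm : Measurable fun q : ℝ × (Fin n → ℝ) =>
      Fin.insertNth (α := fun _ => ℝ) k q.1 q.2 := by
    rw [hgeq]
    exact (MeasurableEquiv.piFinSuccAbove (fun _ : Fin (n+1) => ℝ) k).symm.measurable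
  have hS : MeasurableSet ((fun q : ℝ × (Fin n → ℝ) =>
      Fin.insertNth (α := fun _ => ℝ) k q.1 q.2) ⁻¹' T) := hgm hT
  have hPm : Measurable fun y => P (σ y) := measurable_measure_prodMk_right hS
  have hNm : Measurable fun y => N (σ y) := measurable_measure_prodMk_right hS
  rw [← integral_toReal hPm.aemeasurable (ae_of_all _ fun y => measure_lt_top _ _),
    ← integral_toReal hNm.aemeasurable (ae_of_all _ fun y => measure_lt_top _ _)]
  have hint : ∀ (μ0 : Measure ℝ) (_ : IsFiniteMeasure μ0)
      (hm : Measurable fun y => μ0 (σ y)),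
      Integrable (fun y => (μ0 (σ y)).toReal) π' := by
    intro μ0 hf hm
    apply Integrable.mono' (integrable_const ((μ0 Set.univ).toReal))
      hm.ennreal_toReal.aestronglyMeasurable
    refine ae_of_all _ fun y => ?_
    rw [Real.norm_eq_abs, abs_of_nonneg ENNReal.toReal_nonneg]
    exact ENNReal.toReal_mono (measure_ne_top _ _) (measure_mono (subset_univ _))
  rw [← integral_sub (hint P inferInstance hPm) (hint N inferInstance hNm)]
  have hb : ∀ y, ‖(P (σ y)).toReal - (N (σ y)).toReal‖ ≤ 2 := by
    intro y
    rw [Real.norm_eq_abs, hP, hN, ← sm_eval ν (hsec y).1.measurableSet]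
    exact key_interval hν (hsec y).1 (hsec y).2
  have hfin := norm_integral_le_of_norm_le_const (μ := π')
    (f := fun y => (P (σ y)).toReal - (N (σ y)).toReal) (C := 2) (ae_of_all _ hb)
  rw [Real.norm_eq_abs] at hfin
  have huniv : (π' Set.univ).toReal = 1 := by
    have hprob : IsProbabilityMeasure π' := by rw [hπ']; infer_instance
    simp [hprob.measure_univ]
  rw [measureReal_def, huniv, mul_one] at hfin
  exact hfin

lemma vm_sum_apply {β : Type*} [MeasurableSpace β] {ι : Type*} (s : Finset ι)
    (f : ι → SignedMeasure β) (t : Set β) :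
    (∑ i ∈ s, f i) t = ∑ i ∈ s, f i t := by
  classical
  induction s using Finset.induction_on with
  | empty => simp
  | @insert _ _ hns ih =>
    rw [Finset.sum_insert hns, Finset.sum_insert hns, VectorMeasure.add_apply, ih]

end AuxLemmas

/-- If `ζ` is a probability measure on ℝ, `ν` a finite signed measure with
`‖ν‖_∞ ≤ 1`, and `A` a `p×p` real matrix, then
`‖∑_{k=1}^p L_A(ζ^{⊗(k-1)} ⊗ ν ⊗ ζ^{⊗(p-k)})‖_∞ ≤ 2p`. -/
theorem kolNorm_sum_map_signedPi_le
    {p : ℕ} (ζ : Measure ℝ) [IsProbabilityMeasure ζ]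
    (ν : SignedMeasure ℝ) (hν : kolNorm1 ν ≤ 1)
    (A : Matrix (Fin p) (Fin p) ℝ) :
    kolNorm (∑ k : Fin p,
      (signedPi (fun i => if i = k then ν else ζ.toSignedMeasure)).map A.mulVec) ≤
      2 * p := by
  cases p with
  | zero =>
    have h0 : (∑ k : Fin 0,
        (signedPi (fun i => if i = k then ν else ζ.toSignedMeasure)).map A.mulVec) = 0 := by
      simp
    rw [h0]
    unfold kolNorm
    simp only [VectorMeasure.zero_apply, abs_zero, ciSup_const]
    simp
  | succ n =>
    have hmul : Measurable (A.mulVec) := by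
      apply measurable_pi_lambda
      intro i
      simp only [Matrix.mulVec, dotProduct]
      exact Finset.measurable_sum _ fun j _ => (measurable_pi_apply j).const_mul _
    unfold kolNorm
    apply ciSup_le
    intro x
    have hIic : MeasurableSet (Set.Iic x) := by
      have : Set.Iic x = ⋂ i, (fun v : Fin (n+1) → ℝ => v i) ⁻¹' Set.Iic (x i) := by
        ext v
        simp [Set.mem_Iic, Pi.le_def]
      rw [this]
      exact MeasurableSet.iInter fun i => (measurable_pi_apply i) measurableSet_Iic
    rw [vm_sum_apply]
    have hk : ∀ k : Fin (n+1),
        |((signedPi (fun i => if i = k then ν else ζ.toSignedMeasure)).map A.mulVec)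
          (Set.Iic x)| ≤ 2 := by
      intro k
      rw [VectorMeasure.map_apply _ hmul hIic]
      exact perk_bound ζ ν hν k (hmul hIic) (fun y => section_nice A x k y)
    calc |∑ k : Fin (n+1),
        ((signedPi (fun i => if i = k then ν else ζ.toSignedMeasure)).map A.mulVec)
          (Set.Iic x)|
        ≤ ∑ k : Fin (n+1), |((signedPi (fun i => if i = k then ν else ζ.toSignedMeasure)).map
            A.mulVec) (Set.Iic x)| := Finset.abs_sum_le_sum_abs _ _
      _ ≤ ∑ _k : Fin (n+1), (2:ℝ) := Finset.sum_le_sum fun k _ => hk k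
      _ = 2 * (n+1 : ℕ) := by
          rw [Finset.sum_const, Finset.card_univ, Fintype.card_fin]
          push_cast
          ring
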